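/- arXiv:2308.13748 — 3 statements merged into one kernel-verified Lean document; each statement's English description precedes it below -/
import Mathlib

section
/- If S_i(u) = A_i ∩ H_u^+ is a singleton and int(A_i) ∩ H_u^+ is empty, then for any sequence u^k converging to u in S^n, the diameter of S_i(u^k) converges to 0. -/
open Filter Topology

/-- The closed upper half-space `H_u^+`. -/
def Hplus (n : ℕ) (u : EuclideanSpace ℝ (Fin (n + 1))) : Set (EuclideanSpace ℝ (Fin n)) :=
  {x | (∑ i : Fin n, u (Fin.castSucc i) * x i) ≥ u (Fin.last n)}

theorem diam_tendsto_zero (n : ℕ) (A : Set (EuclideanSpace ℝ (Fin n)))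
    (hne : A.Nonempty) (hcomp : IsCompact A) (hconv : Convex ℝ A)
    (ulim : EuclideanSpace ℝ (Fin (n + 1)))
    (hulim : ulim ∈ Metric.sphere (0 : EuclideanSpace ℝ (Fin (n + 1))) 1)
    (hsingle : ∃ x₀, A ∩ Hplus n ulim = {x₀})
    (hint : interior A ∩ Hplus n ulim = ∅)
    (u : ℕ → EuclideanSpace ℝ (Fin (n + 1)))
    (hu : ∀ k, u k ∈ Metric.sphere (0 : EuclideanSpace ℝ (Fin (n + 1))) 1)
    (hut : Tendsto u atTop (𝓝 ulim)) :
    Tendsto (fun k => Metric.diam (A ∩ Hplus n (u k))) atTop (𝓝 0) := by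
  obtain ⟨x₀, hx₀⟩ := hsingle
  set g : EuclideanSpace ℝ (Fin (n + 1)) × EuclideanSpace ℝ (Fin n) → ℝ :=
    fun p => (∑ i : Fin n, p.1 (Fin.castSucc i) * p.2 i) - p.1 (Fin.last n) with hg
  have hgc : Continuous g := by
    apply Continuous.sub
    · exact continuous_finset_sum _ fun i _ =>
        ((EuclideanSpace.proj (Fin.castSucc i)).continuous.comp continuous_fst).mul
          ((EuclideanSpace.proj i).continuous.comp continuous_snd)
    · exact (EuclideanSpace.proj (Fin.last n)).continuous.comp continuous_fst
  have hmem : ∀ (v : EuclideanSpace ℝ (Fin (n + 1))) (x : EuclideanSpace ℝ (Fin n)),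
      x ∈ Hplus n v ↔ 0 ≤ g (v, x) := by
    intro v x
    simp [Hplus, hg, sub_nonneg, ge_iff_le]
  rw [NormedAddCommGroup.tendsto_nhds_zero]
  intro ε hε
  set r : ℝ := ε / 4 with hr
  have hrpos : 0 < r := by positivity
  set K : Set (EuclideanSpace ℝ (Fin n)) := A ∩ (Metric.ball x₀ r)ᶜ with hK
  have hKcomp : IsCompact K := hcomp.inter_right Metric.isOpen_ball.isClosed_compl
  have hKneg : ∀ x ∈ K, g (ulim, x) < 0 := by
    intro x hx
    by_contra h
    push_neg at h
    have hxH : x ∈ Hplus n ulim := (hmem ulim x).2 h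
    have hxs : x ∈ A ∩ Hplus n ulim := ⟨hx.1, hxH⟩
    rw [hx₀] at hxs
    have hxx : x = x₀ := hxs
    exact hx.2 (by simp only [Metric.mem_ball, hxx, dist_self]; exact hrpos)
  have hev : ∀ᶠ v in 𝓝 ulim, ∀ x ∈ K, g (v, x) < 0 :=
    hKcomp.eventually_forall_of_forall_eventually fun x hx =>
      hgc.continuousAt.eventually_lt continuousAt_const (hKneg x hx)
  have hevk : ∀ᶠ k in atTop, ∀ x ∈ K, g (u k, x) < 0 := hut.eventually hev
  filter_upwards [hevk] with k hk
  have hsub : A ∩ Hplus n (u k) ⊆ Metric.closedBall x₀ r := by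
    intro x hx
    by_contra hxb
    have hxK : x ∈ K := ⟨hx.1, fun hball => hxb (Metric.ball_subset_closedBall hball)⟩
    have h1 := hk x hxK
    have h2 : 0 ≤ g (u k, x) := (hmem (u k) x).1 hx.2
    linarith
  have hdiam : Metric.diam (A ∩ Hplus n (u k)) ≤ 2 * r := by
    apply Metric.diam_le_of_forall_dist_le (by positivity)
    intro x hx y hy
    have h1 : dist x x₀ ≤ r := hsub hx
    have h2 : dist y x₀ ≤ r := hsub hy
    calc dist x y ≤ dist x x₀ + dist y x₀ := dist_triangle_right x y x₀
      _ ≤ 2 * r := by linarith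
  rw [Real.norm_of_nonneg Metric.diam_nonneg]
  calc Metric.diam (A ∩ Hplus n (u k)) ≤ 2 * r := hdiam
    _ < ε := by rw [hr]; linarith
end

section
/- Let A_i ⊆ R^n (i = 1,...,n) be compact strictly convex sets with nonempty interior (i.e., every supporting hyperplane meets A_i in a single point), and f_i: R^n × S^n → R continuous. Then the map ψ = (ψ_1,...,ψ_n): S^n → R^n, where ψ_i(u) = max_{x ∈ A_i ∩ H_u^+} f_i(x,u) − min_{x ∈ A_i ∩ H_u^+} f_i(x,u) if A_i ∩ H_u^+ ≠ ∅ and ψ_i(u) = 0 otherwise, is continuous on all of S^n. -/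
open Filter Topology

open Classical in
/-- The optimal-value function `ψ_i`. -/
noncomputable def psi (n : ℕ) (A : Set (EuclideanSpace ℝ (Fin n)))
    (f : EuclideanSpace ℝ (Fin n) → EuclideanSpace ℝ (Fin (n + 1)) → ℝ)
    (u : EuclideanSpace ℝ (Fin (n + 1))) : ℝ :=
  if (A ∩ Hplus n u).Nonempty then
    sSup ((fun x => f x u) '' (A ∩ Hplus n u)) - sInf ((fun x => f x u) '' (A ∩ Hplus n u))
  else 0

namespace PsiAux

/-- The linear functional `x ↦ ⟨u', x⟩`. -/
noncomputable def lf (n : ℕ) (u : EuclideanSpace ℝ (Fin (n + 1)))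
    (x : EuclideanSpace ℝ (Fin n)) : ℝ :=
  ∑ i : Fin n, u (Fin.castSucc i) * x i

lemma mem_Hplus {n : ℕ} {u : EuclideanSpace ℝ (Fin (n + 1))} {x : EuclideanSpace ℝ (Fin n)} :
    x ∈ Hplus n u ↔ u (Fin.last n) ≤ lf n u x := Iff.rfl

lemma lf_cont2 (n : ℕ) :
    Continuous fun p : (EuclideanSpace ℝ (Fin n)) × (EuclideanSpace ℝ (Fin (n + 1))) =>
      lf n p.2 p.1 := by
  unfold lf
  exact continuous_finset_sum _ fun i _ =>
    (((EuclideanSpace.proj (Fin.castSucc i)).continuous.comp continuous_snd).mul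
      ((EuclideanSpace.proj i).continuous.comp continuous_fst))

lemma lf_cont_x (n : ℕ) (u : EuclideanSpace ℝ (Fin (n + 1))) :
    Continuous fun x => lf n u x :=
  (lf_cont2 n).comp (continuous_id.prodMk continuous_const)

lemma lf_cont_u (n : ℕ) (x : EuclideanSpace ℝ (Fin n)) :
    Continuous fun u => lf n u x :=
  (lf_cont2 n).comp (continuous_const.prodMk continuous_id)

lemma lf_combo (n : ℕ) (u : EuclideanSpace ℝ (Fin (n + 1)))
    (x y : EuclideanSpace ℝ (Fin n)) (a b : ℝ) :
    lf n u (a • x + b • y) = a * lf n u x + b * lf n u y := by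
  unfold lf
  rw [Finset.mul_sum, Finset.mul_sum, ← Finset.sum_add_distrib]
  refine Finset.sum_congr rfl fun i _ => ?_
  simp only [PiLp.add_apply, PiLp.smul_apply, smul_eq_mul]
  ring

lemma K_compact {n : ℕ} {A : Set (EuclideanSpace ℝ (Fin n))} (hA : IsCompact A)
    (v : EuclideanSpace ℝ (Fin (n + 1))) : IsCompact (A ∩ Hplus n v) := by
  refine hA.inter_right ?_
  have : Hplus n v = {x | v (Fin.last n) ≤ lf n v x} := rfl
  rw [this]
  exact isClosed_le continuous_const (lf_cont_x n v)

lemma pos_near {F : Type*} [PseudoMetricSpace F] {φ : F → ℝ} (hφ : Continuous φ) {u0 : F}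
    (h : 0 < φ u0) : ∃ δ > 0, ∀ v, dist v u0 < δ → 0 < φ v := by
  obtain ⟨δ, hδ, H⟩ := Metric.continuousAt_iff.mp hφ.continuousAt (φ u0) h
  refine ⟨δ, hδ, fun v hv => ?_⟩
  have := H hv
  rw [Real.dist_eq] at this
  have := abs_lt.mp this
  linarith [this.1]

lemma proj_trick {α β : Type*} [TopologicalSpace α] [MetricSpace β] {C : Set (α × β)}
    (hC : IsCompact C) {u0 : β} (h : ∀ x, (x, u0) ∉ C) :
    ∃ δ > 0, ∀ v, dist v u0 < δ → ∀ x, (x, v) ∉ C := by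
  have hD : IsCompact (Prod.snd '' C) := hC.image continuous_snd
  have hu : u0 ∈ (Prod.snd '' C)ᶜ := by
    rintro ⟨⟨x, v⟩, hxv, rfl⟩
    exact h x hxv
  obtain ⟨δ, hδ, hball⟩ := Metric.isOpen_iff.mp hD.isClosed.isOpen_compl u0 hu
  exact ⟨δ, hδ, fun v hv x hxv => hball (Metric.mem_ball.mpr hv) ⟨(x, v), hxv, rfl⟩⟩

/-- The key compactness/projection tool: if a closed condition fails everywhere on
`A ∩ H_{u0}^+`, it fails on `A ∩ H_v^+` for all `v` in the sphere near `u0`. -/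
lemma key {n : ℕ} {A : Set (EuclideanSpace ℝ (Fin n))} (hA : IsCompact A)
    (u0 : EuclideanSpace ℝ (Fin (n + 1)))
    (φ : (EuclideanSpace ℝ (Fin n)) × (EuclideanSpace ℝ (Fin (n + 1))) → ℝ)
    (hφ : Continuous φ)
    (h : ∀ x ∈ A, u0 (Fin.last n) ≤ lf n u0 x → φ (x, u0) < 0) :
    ∃ δ > 0, ∀ v ∈ Metric.sphere (0 : EuclideanSpace ℝ (Fin (n + 1))) 1, dist v u0 < δ →
      ∀ x ∈ A, v (Fin.last n) ≤ lf n v x → φ (x, v) < 0 := by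
  set C := (A ×ˢ Metric.sphere (0 : EuclideanSpace ℝ (Fin (n + 1))) 1) ∩
    {p | p.2 (Fin.last n) ≤ lf n p.2 p.1 ∧ 0 ≤ φ p} with hCdef
  have hclosed : IsClosed {p : (EuclideanSpace ℝ (Fin n)) × (EuclideanSpace ℝ (Fin (n + 1))) |
      p.2 (Fin.last n) ≤ lf n p.2 p.1 ∧ 0 ≤ φ p} := by
    refine IsClosed.inter ?_ (isClosed_le continuous_const hφ)
    exact isClosed_le ((EuclideanSpace.proj (Fin.last n)).continuous.comp continuous_snd)
      (lf_cont2 n)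
  have hCc : IsCompact C := (hA.prod (isCompact_sphere _ _)).inter_right hclosed
  obtain ⟨δ, hδ, hd⟩ := proj_trick hCc
    (u0 := u0) (fun x hx => absurd hx.2.2 (not_le.mpr (h x hx.1.1 hx.2.1)))
  refine ⟨δ, hδ, fun v hv hvd x hxA hxh => ?_⟩
  by_contra hcon
  exact hd v hvd x ⟨⟨hxA, hv⟩, hxh, not_lt.mp hcon⟩

theorem psi_continuousOn {n : ℕ} {A : Set (EuclideanSpace ℝ (Fin n))}
    (hne : A.Nonempty) (hcomp : IsCompact A) (hconv : Convex ℝ A)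
    (hstrict : ∀ (v : EuclideanSpace ℝ (Fin n)) (c : ℝ), v ≠ 0 →
      (∀ y ∈ A, (∑ j : Fin n, v j * y j) ≤ c) →
      ({y ∈ A | (∑ j : Fin n, v j * y j) = c}).Subsingleton)
    {g : EuclideanSpace ℝ (Fin n) → EuclideanSpace ℝ (Fin (n + 1)) → ℝ}
    (hg : Continuous fun p : EuclideanSpace ℝ (Fin n) × EuclideanSpace ℝ (Fin (n + 1)) =>
      g p.1 p.2) :
    ContinuousOn (psi n A g) (Metric.sphere (0 : EuclideanSpace ℝ (Fin (n + 1))) 1) := by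
  intro u0 hu0
  rw [Metric.continuousWithinAt_iff]
  intro ε hε
  obtain ⟨xm, hxmA, hxm⟩ := hcomp.exists_isMaxOn hne ((lf_cont_x n u0).continuousOn)
  have hgx : ∀ v, Continuous fun x => g x v := fun v =>
    hg.comp (continuous_id.prodMk continuous_const)
  have hgu : ∀ x, Continuous fun v => g x v := fun x =>
    hg.comp (continuous_const.prodMk continuous_id)
  rcases lt_trichotomy (lf n u0 xm) (u0 (Fin.last n)) with hcase | hcase | hcase
  -- Case 1: the half-space misses A, locally empty
  · obtain ⟨δ, hδ, hkey⟩ := key hcomp u0 (fun p => lf n p.2 p.1 - p.2 (Fin.last n))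
      ((lf_cont2 n).sub ((EuclideanSpace.proj (Fin.last n)).continuous.comp continuous_snd))
      (fun x hxA hxh => absurd (hxh.trans (hxm hxA)) (not_le.mpr hcase))
    refine ⟨δ, hδ, fun v hv hvd => ?_⟩
    have hKv : ¬ (A ∩ Hplus n v).Nonempty := by
      rintro ⟨x, hxA, hxH⟩
      have h1 := hkey v hv hvd x hxA (mem_Hplus.mp hxH)
      have h2 := mem_Hplus.mp hxH
      linarith
    have hKu0 : ¬ (A ∩ Hplus n u0).Nonempty := by
      rintro ⟨x, hxA, hxH⟩
      exact absurd ((mem_Hplus.mp hxH).trans (hxm hxA)) (not_le.mpr hcase)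
    simp only [psi, if_neg hKv, if_neg hKu0, dist_self]
    exact hε
  -- Case 2: the hyperplane supports A; K(u0) is a single point
  · set p := xm with hp
    set v' : EuclideanSpace ℝ (Fin n) :=
      (WithLp.equiv 2 (Fin n → ℝ)).symm (fun j => u0 (Fin.castSucc j)) with hv'
    have hv'app : ∀ j, v' j = u0 (Fin.castSucc j) := fun j => by
      rw [hv']; rfl
    have hlfeq : ∀ y : EuclideanSpace ℝ (Fin n), (∑ j : Fin n, v' j * y j) = lf n u0 y := by
      intro y
      exact Finset.sum_congr rfl fun j _ => by rw [hv'app]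
    have hvne : v' ≠ 0 := by
      intro h0
      have hj : ∀ j, u0 (Fin.castSucc j) = 0 := by
        intro j
        have : v' j = (0 : EuclideanSpace ℝ (Fin n)) j := by rw [h0]
        rw [hv'app] at this
        simpa using this
      have hlf0 : lf n u0 xm = 0 := by
        unfold lf
        simp [hj]
      have hlast : u0 (Fin.last n) = 0 := by rw [← hcase, hlf0]
      have hu00 : u0 = 0 := by
        apply (WithLp.equiv 2 (Fin (n + 1) → ℝ)).injective
        funext i
        refine Fin.lastCases ?_ ?_ i
        · simpa using hlast
        · intro j
          simpa using hj j
      rw [hu00] at hu0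
      simp at hu0
    have hbound : ∀ y ∈ A, (∑ j : Fin n, v' j * y j) ≤ u0 (Fin.last n) := by
      intro y hy
      rw [hlfeq y]
      exact (hxm hy).trans hcase.le
    have hsub := hstrict v' (u0 (Fin.last n)) hvne hbound
    have hK : A ∩ Hplus n u0 = {p} := by
      apply Set.eq_singleton_iff_unique_mem.mpr
      constructor
      · exact ⟨hxmA, mem_Hplus.mpr hcase.ge⟩
      · rintro x ⟨hxA, hxH⟩
        have hx1 : lf n u0 x = u0 (Fin.last n) :=
          le_antisymm ((hxm hxA).trans hcase.le) (mem_Hplus.mp hxH)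
        refine hsub ⟨hxA, ?_⟩ ⟨hxmA, ?_⟩
        · rw [hlfeq x]; exact hx1
        · rw [hlfeq xm]; exact hcase
    have hpsi0 : psi n A g u0 = 0 := by
      simp only [psi]
      rw [hK, if_pos (Set.singleton_nonempty p), Set.image_singleton, csSup_singleton,
        csInf_singleton, sub_self]
    obtain ⟨δ, hδ, hkey⟩ := key hcomp u0 (fun q => |g q.1 q.2 - g p u0| - ε / 4)
      (((hg.sub continuous_const).abs).sub continuous_const)
      (fun x hxA hxh => by
        have hx : x ∈ A ∩ Hplus n u0 := ⟨hxA, mem_Hplus.mpr hxh⟩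
        rw [hK] at hx
        rw [hx]
        simp
        linarith)
    refine ⟨δ, hδ, fun v hv hvd => ?_⟩
    by_cases hKv : (A ∩ Hplus n v).Nonempty
    · obtain ⟨x0, hx0⟩ := hKv
      have himg : ∀ y ∈ (fun x => g x v) '' (A ∩ Hplus n v), |y - g p u0| ≤ ε / 4 := by
        rintro y ⟨x, ⟨hxA, hxH⟩, rfl⟩
        have := hkey v hv hvd x hxA (mem_Hplus.mp hxH)
        linarith
      have hKvc : IsCompact (A ∩ Hplus n v) := K_compact hcomp v
      have himgc : IsCompact ((fun x => g x v) '' (A ∩ Hplus n v)) := hKvc.image (hgx v)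
      have hne' : ((fun x => g x v) '' (A ∩ Hplus n v)).Nonempty :=
        ⟨_, Set.mem_image_of_mem _ hx0⟩
      have h1 : sSup ((fun x => g x v) '' (A ∩ Hplus n v)) ≤ g p u0 + ε / 4 :=
        csSup_le hne' fun y hy => by
          have := abs_le.mp (himg y hy); linarith [this.2]
      have h2 : g p u0 - ε / 4 ≤ sInf ((fun x => g x v) '' (A ∩ Hplus n v)) :=
        le_csInf hne' fun y hy => by
          have := abs_le.mp (himg y hy); linarith [this.1]
      have h3 : sInf ((fun x => g x v) '' (A ∩ Hplus n v)) ≤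
          sSup ((fun x => g x v) '' (A ∩ Hplus n v)) :=
        csInf_le_csSup hne' himgc.bddBelow himgc.bddAbove
      rw [hpsi0]
      have hKv' : (A ∩ Hplus n v).Nonempty := ⟨x0, hx0⟩
      simp only [psi]
      rw [if_pos hKv', Real.dist_eq, sub_zero, abs_lt]
      constructor <;> linarith
    · rw [hpsi0]
      simp only [psi, if_neg hKv, dist_self]
      exact hε
  -- Case 3: the half-space cuts strictly into A
  · have hKu0ne : (A ∩ Hplus n u0).Nonempty := ⟨xm, hxmA, mem_Hplus.mpr hcase.le⟩
    have hKu0c : IsCompact (A ∩ Hplus n u0) := K_compact hcomp u0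
    have himgc : IsCompact ((fun x => g x u0) '' (A ∩ Hplus n u0)) := hKu0c.image (hgx u0)
    have himgne : ((fun x => g x u0) '' (A ∩ Hplus n u0)).Nonempty := hKu0ne.image _
    set M := sSup ((fun x => g x u0) '' (A ∩ Hplus n u0)) with hM
    set m' := sInf ((fun x => g x u0) '' (A ∩ Hplus n u0)) with hm'
    obtain ⟨xM, hxMK, hgxM⟩ := himgc.sSup_mem himgne
    obtain ⟨xI, hxIK, hgxI⟩ := himgc.sInf_mem himgne
    -- approximation of a point of K(u0) by points strictly inside the half-space
    have claim : ∀ x ∈ A ∩ Hplus n u0, ∀ ε' > 0, ∃ z ∈ A,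
        u0 (Fin.last n) < lf n u0 z ∧ |g z u0 - g x u0| < ε' := by
      rintro x ⟨hxA, hxH⟩ ε' hε'
      have hxH' : u0 (Fin.last n) ≤ lf n u0 x := mem_Hplus.mp hxH
      have hcont : Continuous fun t : ℝ => g ((1 - t) • x + t • xm) u0 :=
        hg.comp ((((continuous_const.sub continuous_id).smul continuous_const).add
          (continuous_id.smul continuous_const)).prodMk continuous_const)
      obtain ⟨δt, hδt, hδtp⟩ := Metric.continuousAt_iff.mp hcont.continuousAt ε' hε'
      set t := min (δt / 2) 1 with ht
      have ht0 : 0 < t := lt_min (by linarith) one_pos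
      have ht1 : t ≤ 1 := min_le_right _ _
      have htd : dist t (0 : ℝ) < δt := by
        rw [Real.dist_eq, sub_zero, abs_of_pos ht0]
        exact (min_le_left _ _).trans_lt (by linarith)
      refine ⟨(1 - t) • x + t • xm, hconv hxA hxmA (by linarith) ht0.le (by ring), ?_, ?_⟩
      · rw [lf_combo]
        have e1 : (1 - t) * (u0 (Fin.last n)) ≤ (1 - t) * lf n u0 x :=
          mul_le_mul_of_nonneg_left hxH' (by linarith)
        have e2 : t * (u0 (Fin.last n)) < t * lf n u0 xm :=
          mul_lt_mul_of_pos_left hcase ht0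
        nlinarith
      · have h' := hδtp htd
        rw [Real.dist_eq] at h'
        rw [show ((1 : ℝ) - 0) • x + (0 : ℝ) • xm = x by simp] at h'
        exact h'
    obtain ⟨zM, hzMA, hzMl, hzMg⟩ := claim xM hxMK (ε / 8) (by linarith)
    obtain ⟨zI, hzIA, hzIl, hzIg⟩ := claim xI hxIK (ε / 8) (by linarith)
    -- δ3 : near u0, zM is in K(v) and g zM v is close to g zM u0
    obtain ⟨δ3, hδ3, hkey3⟩ := pos_near (φ := fun v => min (lf n v zM - v (Fin.last n))
        (ε / 8 - |g zM v - g zM u0|))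
      (Continuous.min ((lf_cont_u n zM).sub (EuclideanSpace.proj (Fin.last n)).continuous)
        (continuous_const.sub ((hgu zM).sub continuous_const).abs))
      (by
        apply lt_min
        · linarith
        · simp; linarith)
    obtain ⟨δ4, hδ4, hkey4⟩ := pos_near (φ := fun v => min (lf n v zI - v (Fin.last n))
        (ε / 8 - |g zI v - g zI u0|))
      (Continuous.min ((lf_cont_u n zI).sub (EuclideanSpace.proj (Fin.last n)).continuous)
        (continuous_const.sub ((hgu zI).sub continuous_const).abs))
      (by
        apply lt_min
        · linarith
        · simp; linarith)
    -- δ1 : upper bound for sSup; δ2 : lower bound for sInf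
    have hub : ∀ x ∈ A, u0 (Fin.last n) ≤ lf n u0 x → g x u0 ≤ M := by
      intro x hxA hxh
      exact le_csSup himgc.bddAbove (Set.mem_image_of_mem _ ⟨hxA, mem_Hplus.mpr hxh⟩)
    have hlb : ∀ x ∈ A, u0 (Fin.last n) ≤ lf n u0 x → m' ≤ g x u0 := by
      intro x hxA hxh
      exact csInf_le himgc.bddBelow (Set.mem_image_of_mem _ ⟨hxA, mem_Hplus.mpr hxh⟩)
    obtain ⟨δ1, hδ1, hkey1⟩ := key hcomp u0 (fun q => g q.1 q.2 - (M + ε / 8))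
      (hg.sub continuous_const)
      (fun x hxA hxh => by have := hub x hxA hxh; linarith)
    obtain ⟨δ2, hδ2, hkey2⟩ := key hcomp u0 (fun q => (m' - ε / 8) - g q.1 q.2)
      (continuous_const.sub hg)
      (fun x hxA hxh => by have := hlb x hxA hxh; linarith)
    refine ⟨min (min δ1 δ2) (min δ3 δ4), by positivity, fun v hv hvd => ?_⟩
    have hvd1 : dist v u0 < δ1 := hvd.trans_le ((min_le_left _ _).trans (min_le_left _ _))
    have hvd2 : dist v u0 < δ2 := hvd.trans_le ((min_le_left _ _).trans (min_le_right _ _))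
    have hvd3 : dist v u0 < δ3 := hvd.trans_le ((min_le_right _ _).trans (min_le_left _ _))
    have hvd4 : dist v u0 < δ4 := hvd.trans_le ((min_le_right _ _).trans (min_le_right _ _))
    have h3 := lt_min_iff.mp (hkey3 v hvd3)
    have h4 := lt_min_iff.mp (hkey4 v hvd4)
    have hzMK : zM ∈ A ∩ Hplus n v := ⟨hzMA, mem_Hplus.mpr (by linarith [h3.1])⟩
    have hzIK : zI ∈ A ∩ Hplus n v := ⟨hzIA, mem_Hplus.mpr (by linarith [h4.1])⟩
    have hKvne : (A ∩ Hplus n v).Nonempty := ⟨zM, hzMK⟩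
    have hKvc : IsCompact (A ∩ Hplus n v) := K_compact hcomp v
    have himgvc : IsCompact ((fun x => g x v) '' (A ∩ Hplus n v)) := hKvc.image (hgx v)
    have himgvne : ((fun x => g x v) '' (A ∩ Hplus n v)).Nonempty := hKvne.image _
    -- bounds for sSup over K(v)
    have hSup_ub : sSup ((fun x => g x v) '' (A ∩ Hplus n v)) ≤ M + ε / 8 :=
      csSup_le himgvne (by
        rintro y ⟨x, ⟨hxA, hxH⟩, rfl⟩
        have := hkey1 v hv hvd1 x hxA (mem_Hplus.mp hxH)
        linarith)
    have hInf_lb : m' - ε / 8 ≤ sInf ((fun x => g x v) '' (A ∩ Hplus n v)) :=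
      le_csInf himgvne (by
        rintro y ⟨x, ⟨hxA, hxH⟩, rfl⟩
        have := hkey2 v hv hvd2 x hxA (mem_Hplus.mp hxH)
        linarith)
    have habs3 := abs_lt.mp (show |g zM v - g zM u0| < ε / 8 by linarith [h3.2])
    have habs4 := abs_lt.mp (show |g zI v - g zI u0| < ε / 8 by linarith [h4.2])
    have habsM := abs_lt.mp hzMg
    have habsI := abs_lt.mp hzIg
    have hSup_lb : M - ε / 4 < sSup ((fun x => g x v) '' (A ∩ Hplus n v)) := by
      have hle : g zM v ≤ sSup ((fun x => g x v) '' (A ∩ Hplus n v)) :=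
        le_csSup himgvc.bddAbove (Set.mem_image_of_mem _ hzMK)
      have hgxM' : g xM u0 = M := by rw [hM]; exact hgxM
      linarith [habs3.2, habsM.2, hgxM']
    have hInf_ub : sInf ((fun x => g x v) '' (A ∩ Hplus n v)) < m' + ε / 4 := by
      have hle : sInf ((fun x => g x v) '' (A ∩ Hplus n v)) ≤ g zI v :=
        csInf_le himgvc.bddBelow (Set.mem_image_of_mem _ hzIK)
      have hgxI' : g xI u0 = m' := by rw [hm']; exact hgxI
      linarith [habs4.1, habsI.1, hgxI']
    simp only [psi, if_pos hKvne, if_pos hKu0ne]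
    rw [Real.dist_eq, abs_lt]
    rw [← hM, ← hm']
    constructor <;> linarith

end PsiAux

theorem psi_continuous (n : ℕ) (A : Fin n → Set (EuclideanSpace ℝ (Fin n)))
    (hne : ∀ i, (A i).Nonempty) (hcomp : ∀ i, IsCompact (A i)) (hconv : ∀ i, Convex ℝ (A i))
    (hint : ∀ i, (interior (A i)).Nonempty)
    -- strict convexity: every supporting hyperplane meets `A i` in at most one point
    (hstrict : ∀ i (v : EuclideanSpace ℝ (Fin n)) (c : ℝ), v ≠ 0 →
      (∀ y ∈ A i, (∑ j : Fin n, v j * y j) ≤ c) →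
      ({y ∈ A i | (∑ j : Fin n, v j * y j) = c}).Subsingleton)
    (f : Fin n → EuclideanSpace ℝ (Fin n) → EuclideanSpace ℝ (Fin (n + 1)) → ℝ)
    (hf : ∀ i, Continuous fun p : EuclideanSpace ℝ (Fin n) × EuclideanSpace ℝ (Fin (n + 1)) =>
      f i p.1 p.2) :
    ContinuousOn (fun u (i : Fin n) => psi n (A i) (f i) u)
      (Metric.sphere (0 : EuclideanSpace ℝ (Fin (n + 1))) 1) := by
  rw [continuousOn_pi]
  intro i
  exact PsiAux.psi_continuousOn (hne i) (hcomp i) (hconv i) (hstrict i) (hf i)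
end

section
/- Let A ⊆ R^n be a nonempty compact convex set. The function φ: S^n → R defined by φ(u) = δ*(u' | A ∩ H_u^+) − δ_*(u' | A ∩ H_u^+) when A ∩ H_u^+ ≠ ∅, φ(u) = (1 − ε − u_{n+1})/ε when A ∩ H_u^+ = ∅ and u_{n+1} > 1 − ε, and φ(u) = 0 when A ∩ H_u^+ = ∅ and u_{n+1} ≤ 1 − ε, is continuous on S^n for sufficiently small ε > 0, without any strict convexity assumption on A. -/
open Classical in
/-- The modified optimal-value function `φ` with `f(x,u) = ⟨u', x⟩`. -/
noncomputable def phi (n : ℕ) (A : Set (EuclideanSpace ℝ (Fin n))) (ε : ℝ)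
    (u : EuclideanSpace ℝ (Fin (n + 1))) : ℝ :=
  if (A ∩ Hplus n u).Nonempty then
    sSup ((fun x => ∑ i : Fin n, u (Fin.castSucc i) * x i) '' (A ∩ Hplus n u)) -
      sInf ((fun x => ∑ i : Fin n, u (Fin.castSucc i) * x i) '' (A ∩ Hplus n u))
  else if u (Fin.last n) > 1 - ε then (1 - ε - u (Fin.last n)) / ε
  else 0

open Set

noncomputable section PhiAux

/-- The linear objective `x ↦ ⟨u', x⟩`. -/
def lf (n : ℕ) (u : EuclideanSpace ℝ (Fin (n+1))) : EuclideanSpace ℝ (Fin n) → ℝ :=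
  fun x => ∑ i : Fin n, u (Fin.castSucc i) * x i

/-- The first `n` coordinates of `u`. -/
def upart (n : ℕ) (u : EuclideanSpace ℝ (Fin (n+1))) : EuclideanSpace ℝ (Fin n) :=
  WithLp.toLp 2 (fun i => u (Fin.castSucc i))

lemma lf_eq_inner (n : ℕ) (u : EuclideanSpace ℝ (Fin (n+1))) (x : EuclideanSpace ℝ (Fin n)) :
    lf n u x = (inner ℝ (upart n u) x : ℝ) := by
  simp [lf, upart, PiLp.inner_apply, RCLike.inner_apply, mul_comm]

lemma lf_cont (n : ℕ) (u : EuclideanSpace ℝ (Fin (n+1))) : Continuous (lf n u) := by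
  unfold lf; fun_prop

lemma upart_norm_le (n : ℕ) (u : EuclideanSpace ℝ (Fin (n+1))) : ‖upart n u‖ ≤ ‖u‖ := by
  rw [EuclideanSpace.norm_eq, EuclideanSpace.norm_eq]
  apply Real.sqrt_le_sqrt
  rw [Fin.sum_univ_castSucc (f := fun j => ‖u j‖ ^ 2)]
  have : (0:ℝ) ≤ ‖u (Fin.last n)‖ ^ 2 := sq_nonneg _
  simp only [upart, PiLp.toLp_apply]
  linarith [le_refl (∑ i : Fin n, ‖u (Fin.castSucc i)‖ ^ 2)]

lemma upart_norm_eq (n : ℕ) (u : EuclideanSpace ℝ (Fin (n+1))) (hu : ‖u‖ = 1) :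
    ‖upart n u‖ = Real.sqrt (1 - (u (Fin.last n))^2) := by
  have h1 : (∑ j, ‖u j‖ ^ 2) = 1 := by
    have := EuclideanSpace.norm_eq u
    rw [hu] at this
    have h0 : (0:ℝ) ≤ ∑ j, ‖u j‖ ^ 2 := Finset.sum_nonneg fun _ _ => sq_nonneg _
    nlinarith [Real.sq_sqrt h0]
  rw [Fin.sum_univ_castSucc (f := fun j => ‖u j‖ ^ 2)] at h1
  rw [EuclideanSpace.norm_eq]
  congr 1
  simp only [upart, PiLp.toLp_apply]
  have : ‖u (Fin.last n)‖ ^ 2 = (u (Fin.last n))^2 := by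
    rw [Real.norm_eq_abs, sq_abs]
  linarith

lemma lf_sub_bound (n : ℕ) (u v : EuclideanSpace ℝ (Fin (n+1))) (x : EuclideanSpace ℝ (Fin n))
    (M : ℝ) (hx : ‖x‖ ≤ M) : |lf n u x - lf n v x| ≤ M * dist u v := by
  have key : lf n u x - lf n v x = lf n (u - v) x := by
    simp [lf, Finset.sum_sub_distrib, sub_mul]
  rw [key, lf_eq_inner]
  calc |(inner ℝ (upart n (u - v)) x : ℝ)| ≤ ‖upart n (u - v)‖ * ‖x‖ := abs_real_inner_le_norm _ _
    _ ≤ ‖u - v‖ * M := by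
        apply mul_le_mul (upart_norm_le _ _) hx (norm_nonneg _) (norm_nonneg _)
    _ = M * dist u v := by rw [dist_eq_norm]; ring

/-- The support function `δ*(u' | A)`. -/
def Fsup (n : ℕ) (A : Set (EuclideanSpace ℝ (Fin n))) (u : EuclideanSpace ℝ (Fin (n+1))) : ℝ :=
  sSup (lf n u '' A)

/-- The minimum value `δ_*(u' | A)`. -/
def Ginf (n : ℕ) (A : Set (EuclideanSpace ℝ (Fin n))) (u : EuclideanSpace ℝ (Fin (n+1))) : ℝ :=
  sInf (lf n u '' A)

variable {n : ℕ} {A : Set (EuclideanSpace ℝ (Fin n))}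

lemma Fsup_dist_le (hne : A.Nonempty) (hcomp : IsCompact A) (M : ℝ)
    (hMb : ∀ x ∈ A, ‖x‖ ≤ M) (u v : EuclideanSpace ℝ (Fin (n+1))) :
    dist (Fsup n A u) (Fsup n A v) ≤ M * dist u v := by
  have key : ∀ a b : EuclideanSpace ℝ (Fin (n+1)), Fsup n A a ≤ Fsup n A b + M * dist a b := by
    intro a b
    apply csSup_le (hne.image _)
    rintro y ⟨x, hx, rfl⟩
    have h1 : lf n a x - lf n b x ≤ M * dist a b :=
      (abs_le.mp (lf_sub_bound n a b x M (hMb x hx))).2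
    have h2 : lf n b x ≤ Fsup n A b :=
      le_csSup ((hcomp.image (lf_cont n b)).bddAbove) (mem_image_of_mem _ hx)
    linarith
  rw [Real.dist_eq, abs_le]
  constructor
  · have := key v u; rw [dist_comm] at this; linarith
  · have := key u v; linarith

lemma Ginf_dist_le (hne : A.Nonempty) (hcomp : IsCompact A) (M : ℝ)
    (hMb : ∀ x ∈ A, ‖x‖ ≤ M) (u v : EuclideanSpace ℝ (Fin (n+1))) :
    dist (Ginf n A u) (Ginf n A v) ≤ M * dist u v := by
  have key : ∀ a b : EuclideanSpace ℝ (Fin (n+1)), Ginf n A b - M * dist a b ≤ Ginf n A a := by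
    intro a b
    apply le_csInf (hne.image _)
    rintro y ⟨x, hx, rfl⟩
    have h1 : lf n b x - lf n a x ≤ M * dist a b := by
      have := lf_sub_bound n b a x M (hMb x hx)
      rw [dist_comm a b]
      exact (abs_le.mp this).2
    have h2 : Ginf n A b ≤ lf n b x :=
      csInf_le ((hcomp.image (lf_cont n b)).bddBelow) (mem_image_of_mem _ hx)
    linarith
  rw [Real.dist_eq, abs_le]
  constructor
  · have := key u v; linarith
  · have := key v u; rw [dist_comm] at this; linarith

lemma cont_of_dist_le {F : EuclideanSpace ℝ (Fin (n+1)) → ℝ} {M : ℝ} (hM : 0 ≤ M)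
    (h : ∀ u v, dist (F u) (F v) ≤ M * dist u v) : Continuous F :=
  (LipschitzWith.of_dist_le_mul (K := ⟨M, hM⟩) (by exact_mod_cast h)).continuous

lemma image_eq_Icc (hne : A.Nonempty) (hcomp : IsCompact A) (hconv : Convex ℝ A)
    (u : EuclideanSpace ℝ (Fin (n+1))) :
    lf n u '' A = Icc (Ginf n A u) (Fsup n A u) := by
  have hK : IsCompact (lf n u '' A) := hcomp.image (lf_cont n u)
  have hKne : (lf n u '' A).Nonempty := hne.image _
  have hSup : Fsup n A u ∈ lf n u '' A := hK.sSup_mem hKne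
  have hInf : Ginf n A u ∈ lf n u '' A := hK.sInf_mem hKne
  apply Subset.antisymm
  · intro y hy
    exact ⟨csInf_le hK.bddBelow hy, le_csSup hK.bddAbove hy⟩
  · exact (hconv.isPreconnected.image _ (lf_cont n u).continuousOn).Icc_subset hInf hSup

end PhiAux

theorem phi_continuous (n : ℕ) (A : Set (EuclideanSpace ℝ (Fin n)))
    (hne : A.Nonempty) (hcomp : IsCompact A) (hconv : Convex ℝ A)
    (M : ℝ) (hM : 0 < M) (hMb : ∀ x ∈ A, ‖x‖ ≤ M)
    (ε : ℝ) (hε : 0 < ε) (hsmall : Real.sqrt (2 * ε - ε ^ 2) * M < 1 - ε) :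
    ContinuousOn (phi n A ε) (Metric.sphere (0 : EuclideanSpace ℝ (Fin (n + 1))) 1) := by
  have hM0 : (0:ℝ) ≤ M := hM.le
  have h1ε : 0 < 1 - ε :=
    lt_of_le_of_lt (mul_nonneg (Real.sqrt_nonneg _) hM0) hsmall
  -- the continuous "global formula"
  set Φ : EuclideanSpace ℝ (Fin (n+1)) → ℝ := fun u =>
    max 0 (Fsup n A u - max (u (Fin.last n)) (Ginf n A u)) +
      min 0 ((1 - ε - u (Fin.last n)) / ε) with hΦdef
  have hFc : Continuous (Fsup n A) := cont_of_dist_le hM0 (Fsup_dist_le hne hcomp M hMb)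
  have hGc : Continuous (Ginf n A) := cont_of_dist_le hM0 (Ginf_dist_le hne hcomp M hMb)
  have htc : Continuous fun u : EuclideanSpace ℝ (Fin (n+1)) => u (Fin.last n) := by fun_prop
  have hΦc : Continuous Φ := by
    apply Continuous.add
    · exact continuous_const.max (hFc.sub (htc.max hGc))
    · exact continuous_const.min ((continuous_const.sub htc).div_const ε)
  apply hΦc.continuousOn.congr
  intro u hu
  have hu1 : ‖u‖ = 1 := by
    simpa using mem_sphere_zero_iff_norm.mp hu
  set T := u (Fin.last n) with hT
  set F := Fsup n A u with hF
  set G := Ginf n A u with hG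
  have himgA : lf n u '' A = Icc G F := image_eq_Icc hne hcomp hconv u
  have hGF : G ≤ F := by
    have h2 : (Icc G F).Nonempty := himgA ▸ hne.image _
    exact nonempty_Icc.mp h2
  have hpre : Hplus n u = lf n u ⁻¹' (Ici T) := rfl
  have himg : lf n u '' (A ∩ Hplus n u) = Icc (max T G) F := by
    rw [hpre, image_inter_preimage, himgA]
    ext y
    simp only [mem_inter_iff, mem_Icc, mem_Ici, max_le_iff]
    constructor
    · rintro ⟨⟨h1, h2⟩, h3⟩; exact ⟨⟨h3, h1⟩, h2⟩
    · rintro ⟨⟨h3, h1⟩, h2⟩; exact ⟨⟨h1, h2⟩, h3⟩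
  have hnonIff : (A ∩ Hplus n u).Nonempty ↔ T ≤ F := by
    constructor
    · rintro ⟨x, hxA, hxH⟩
      have h2 : lf n u x ≤ F := by
        rw [hF, Fsup]
        exact le_csSup ((hcomp.image (lf_cont n u)).bddAbove) (mem_image_of_mem _ hxA)
      exact le_trans hxH h2
    · intro h
      have hFin : F ∈ lf n u '' A := by
        rw [himgA]; exact ⟨hGF, le_refl _⟩
      obtain ⟨x, hxA, hfx⟩ := hFin
      exact ⟨x, hxA, by rw [Hplus]; exact le_of_le_of_eq h hfx.symm⟩
  -- upper bound on F
  have hFb : F ≤ Real.sqrt (1 - T^2) * M := by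
    rw [hF, Fsup]
    apply csSup_le (hne.image _)
    rintro y ⟨x, hx, rfl⟩
    rw [lf_eq_inner]
    calc (inner ℝ (upart n u) x : ℝ) ≤ ‖upart n u‖ * ‖x‖ := real_inner_le_norm _ _
      _ ≤ Real.sqrt (1 - T^2) * M := by
          rw [upart_norm_eq n u hu1]
          exact mul_le_mul le_rfl (hMb x hx) (norm_nonneg _) (Real.sqrt_nonneg _)
  have hlf_eq : (fun x => ∑ i : Fin n, u (Fin.castSucc i) * x i) = lf n u := rfl
  by_cases hcase : (A ∩ Hplus n u).Nonempty
  · -- nonempty: phi is the width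
    have hTF : T ≤ F := hnonIff.mp hcase
    have hTlt : T < 1 - ε := by
      by_contra hcon
      push_neg at hcon
      have hT0 : 0 < T := lt_of_lt_of_le h1ε hcon
      have hsq : Real.sqrt (1 - T^2) ≤ Real.sqrt (2 * ε - ε^2) :=
        Real.sqrt_le_sqrt (by nlinarith)
      have hmul : Real.sqrt (1 - T^2) * M ≤ Real.sqrt (2 * ε - ε^2) * M :=
        mul_le_mul_of_nonneg_right hsq hM0
      linarith
    have hmle : max T G ≤ F := max_le hTF hGF
    rw [phi, if_pos hcase, hlf_eq, himg, csSup_Icc hmle, csInf_Icc hmle, hΦdef]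
    simp only
    rw [max_eq_right (sub_nonneg.mpr hmle),
      min_eq_left (div_nonneg (by linarith) hε.le)]
    ring
  · -- empty
    have hFT : F < T := not_le.mp (fun h => hcase (hnonIff.mpr h))
    rw [phi, if_neg hcase, hΦdef]
    simp only
    rw [max_eq_left (le_of_lt (lt_of_le_of_lt hGF hFT)),
      max_eq_left (by linarith : F - T ≤ 0)]
    by_cases hTb : T > 1 - ε
    · rw [if_pos hTb, min_eq_right (le_of_lt (div_neg_of_neg_of_pos (by linarith) hε))]
      ring
    · rw [if_neg hTb, min_eq_left (div_nonneg (by linarith [not_lt.mp hTb]) hε.le)]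
      ring
end
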